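/- Let G be a 2-connected graph on n vertices and v any vertex. Then Σ_{u ≠ v} 1/d(u,v) ≥ (2/n)·H(C_n), i.e. the sum of reciprocal distances from v is at least 2·(1/1 + 1/1 + 1/2 + 1/2 + ... ) corresponding to the distance multiset {1,1,2,2,...,⌊(n-1)/2⌋,⌈(n-1)/2⌉}. -/

import Mathlib

open SimpleGraph Finset

/-- Wiener index: sum of distances over unordered pairs of vertices. -/
noncomputable def wienerIndex {n : ℕ} (G : SimpleGraph (Fin n)) : ℕ :=
  ∑ p ∈ Finset.univ.filter (fun p : Fin n × Fin n => p.1 < p.2), G.dist p.1 p.2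

/-- Harary index: sum of reciprocal distances over unordered pairs of vertices. -/
noncomputable def hararyIndex {n : ℕ} (G : SimpleGraph (Fin n)) : ℝ :=
  ∑ p ∈ Finset.univ.filter (fun p : Fin n × Fin n => p.1 < p.2), (1 : ℝ) / (G.dist p.1 p.2)

/-- A graph is Eulerian if it is connected and every vertex has even degree. -/
def IsEulerian {n : ℕ} (G : SimpleGraph (Fin n)) [DecidableRel G.Adj] : Prop :=
  G.Connected ∧ ∀ v, Even (G.degree v)

/-- A graph is 2-edge-connected if it is connected and remains connected
after the deletion of any single edge. -/
def TwoEdgeConnected {n : ℕ} (G : SimpleGraph (Fin n)) : Prop :=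
  G.Connected ∧ ∀ e ∈ G.edgeSet, (G.deleteEdges {e}).Connected

/-- A graph is 2-connected if it has at least 3 vertices and deleting any
single vertex leaves it connected (no cutvertex). -/
def TwoConnected {n : ℕ} (G : SimpleGraph (Fin n)) : Prop :=
  3 ≤ n ∧ G.Connected ∧
    ∀ v : Fin n, ((⊤ : G.Subgraph).deleteVerts {v}).coe.Connected

-- discrete IVT
lemma aux_ivt (f : ℕ → ℕ) (h0 : f 0 = 0) (hstep : ∀ i, f (i+1) ≤ f i + 1) :
    ∀ m j, j ≤ f m → ∃ i ≤ m, f i = j := by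
  intro m
  induction m with
  | zero => intro j hj; exact ⟨0, le_refl 0, by omega⟩
  | succ m ih =>
    intro j hj
    by_cases h : j ≤ f m
    · obtain ⟨i, hi, hfi⟩ := ih j h
      exact ⟨i, hi.trans (Nat.le_succ m), hfi⟩
    · have : f (m+1) ≤ f m + 1 := hstep m
      exact ⟨m+1, le_refl _, by omega⟩

-- along any walk from v, every distance value up to dist v u is attained on the support
lemma aux_walk_level {V : Type*} {G : SimpleGraph V} {v u : V} (p : G.Walk v u)
    (j : ℕ) (hj : j ≤ G.dist v u) : ∃ x ∈ p.support, G.dist v x = j := by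
  set f : ℕ → ℕ := fun i => G.dist v (p.getVert i) with hf
  have h0 : f 0 = 0 := by simp [hf, SimpleGraph.Walk.getVert_zero]
  have hstep : ∀ i, f (i+1) ≤ f i + 1 := by
    intro i
    by_cases h : i < p.length
    · have hadj := p.adj_getVert_succ h
      have hr : G.Reachable (p.getVert i) (p.getVert (i+1)) := hadj.reachable
      by_cases hvr : G.Reachable v (p.getVert i)
      · obtain ⟨q, hq⟩ := hvr.exists_walk_length_eq_dist
        have := G.dist_le (q.append (SimpleGraph.Walk.cons hadj SimpleGraph.Walk.nil))
        simp only [SimpleGraph.Walk.length_append, SimpleGraph.Walk.length_cons,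
          SimpleGraph.Walk.length_nil, hq] at this
        simpa [hf] using this
      · have : ¬ G.Reachable v (p.getVert (i+1)) := fun hr2 => hvr (hr2.trans hr.symm)
        simp [hf, SimpleGraph.dist_eq_zero_of_not_reachable this]
    · have h1 : p.getVert (i+1) = u := p.getVert_of_length_le (by omega)
      have h2 : p.getVert i = u := p.getVert_of_length_le (by omega)
      simp [hf, h1, h2]
  have hlen : f p.length = G.dist v u := by simp [hf, p.getVert_length]
  obtain ⟨i, hi, hfi⟩ := aux_ivt f h0 hstep p.length j (by omega)
  refine ⟨p.getVert i, ?_, hfi⟩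
  rw [SimpleGraph.Walk.mem_support_iff_exists_getVert]
  exact ⟨i, rfl, hi⟩

-- predecessor: if dist x w ≥ 1, there's a neighbor one closer
lemma aux_pred {V : Type*} {G : SimpleGraph V} {x w : V} (h : 1 ≤ G.dist x w) :
    ∃ y, G.Adj x y ∧ G.dist y w = G.dist x w - 1 := by
  have hne : G.dist x w ≠ 0 := by omega
  have hr : G.Reachable x w := SimpleGraph.Reachable.of_dist_ne_zero hne
  obtain ⟨p, hp⟩ := hr.exists_walk_length_eq_dist
  cases p with
  | nil => simp at hp; simp at h
  | @cons _ y _ hadj q =>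
    refine ⟨y, hadj, ?_⟩
    have h1 : G.dist y w ≤ q.length := G.dist_le q
    have hql : q.length = G.dist x w - 1 := by
      simp [SimpleGraph.Walk.length_cons] at hp; omega
    have hyr : G.Reachable y w := q.reachable
    obtain ⟨q', hq'⟩ := hyr.exists_walk_length_eq_dist
    have h2 := G.dist_le (SimpleGraph.Walk.cons hadj q')
    simp only [SimpleGraph.Walk.length_cons, hq'] at h2
    omega

-- in a 2-connected graph, each level 1..ecc-1 has at least 2 vertices
lemma aux_level_two {n : ℕ} {G : SimpleGraph (Fin n)} (h : TwoConnected G) (v : Fin n)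
    {j : ℕ} (hj : 1 ≤ j) {u : Fin n} (hu : j < G.dist u v) :
    2 ≤ (univ.filter (fun x => G.dist x v = j)).card := by
  obtain ⟨hn, hconn, hdel⟩ := h
  -- a vertex at distance j exists
  have hru : G.Reachable v u := (hconn.preconnected v u)
  obtain ⟨p, _⟩ := hru.exists_walk_length_eq_dist
  have hdvu : j ≤ G.dist v u := by rw [SimpleGraph.dist_comm]; omega
  obtain ⟨x, _, hx⟩ := aux_walk_level p j hdvu
  have hxv : G.dist x v = j := by rw [SimpleGraph.dist_comm]; exact hx
  by_contra hcard
  push_neg at hcard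
  have hmem : x ∈ univ.filter (fun y => G.dist y v = j) := by simp [hxv]
  have huniq : ∀ y : Fin n, G.dist y v = j → y = x := by
    intro y hy
    by_contra hne
    have : 2 ≤ (univ.filter (fun z => G.dist z v = j)).card := by
      have : ({y, x} : Finset (Fin n)) ⊆ univ.filter (fun z => G.dist z v = j) := by
        intro z hz
        simp only [Finset.mem_insert, Finset.mem_singleton] at hz
        rcases hz with rfl | rfl <;> simp [hy, hxv]
      calc 2 = ({y, x} : Finset (Fin n)).card := (Finset.card_pair hne).symm
        _ ≤ _ := Finset.card_le_card this
    omega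
  -- v ≠ x, u ≠ x
  have hvx : v ≠ x := by
    intro hvx; rw [← hvx] at hxv; simp [SimpleGraph.dist_self] at hxv; omega
  have hux : u ≠ x := by
    intro hux; rw [← hux] at hxv; omega
  -- walk avoiding x from v to u
  have hvmem : v ∈ ((⊤ : G.Subgraph).deleteVerts {x}).verts := by
    simp [SimpleGraph.Subgraph.deleteVerts_verts, hvx]
  have humem : u ∈ ((⊤ : G.Subgraph).deleteVerts {x}).verts := by
    simp [SimpleGraph.Subgraph.deleteVerts_verts, hux]
  have hreach := ((hdel x).preconnected ⟨v, hvmem⟩ ⟨u, humem⟩)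
  obtain ⟨q⟩ := hreach
  obtain ⟨z, hzsup, hz⟩ := aux_walk_level (q.map ((⊤ : G.Subgraph).deleteVerts {x}).hom) j hdvu
  have hzx : z = x := huniq z (by rw [SimpleGraph.dist_comm]; exact hz)
  rw [SimpleGraph.Walk.support_map, List.mem_map] at hzsup
  obtain ⟨⟨z', hz'⟩, _, hzz⟩ := hzsup
  subst hzx
  simp only [SimpleGraph.Subgraph.deleteVerts_verts, Set.mem_diff,
    Set.mem_singleton_iff] at hz'
  exact hz'.2 (by simpa using hzz ▸ rfl)

open Classical in
noncomputable def cnt {n : ℕ} (H : SimpleGraph (Fin n)) (w : Fin n) (k : ℕ) : ℕ :=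
  ((univ.erase w).filter (fun u => 1 ≤ H.dist u w ∧ H.dist u w ≤ k)).card

open Classical in
lemma aux_cnt_lower {n : ℕ} {G : SimpleGraph (Fin n)} (h : TwoConnected G) (v : Fin n)
    (k : ℕ) : min (2*k) (n-1) ≤ cnt G v k := by
  by_cases hall : ∀ u : Fin n, G.dist u v ≤ k
  · have : (univ.erase v).filter (fun u => 1 ≤ G.dist u v ∧ G.dist u v ≤ k)
        = univ.erase v := by
      apply Finset.filter_true_of_mem
      intro u hu
      have hune : u ≠ v := (Finset.mem_erase.1 hu).1
      exact ⟨h.2.1.pos_dist_of_ne hune, hall u⟩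
    rw [cnt, this, Finset.card_erase_of_mem (Finset.mem_univ v), Finset.card_univ,
      Fintype.card_fin]
    exact min_le_right _ _
  · push_neg at hall
    obtain ⟨u, hu⟩ := hall
    refine le_trans (min_le_left _ _) ?_
    have hsub : (Finset.Icc 1 k).biUnion (fun j => univ.filter (fun x => G.dist x v = j))
        ⊆ (univ.erase v).filter (fun u => 1 ≤ G.dist u v ∧ G.dist u v ≤ k) := by
      intro x hx
      simp only [Finset.mem_biUnion, Finset.mem_Icc, Finset.mem_filter, Finset.mem_univ,
        true_and] at hx
      obtain ⟨j, ⟨hj1, hjk⟩, hd⟩ := hx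
      refine Finset.mem_filter.2 ⟨Finset.mem_erase.2 ⟨?_, Finset.mem_univ x⟩, by omega⟩
      intro hxv; subst hxv; simp [SimpleGraph.dist_self] at hd; omega
    have hdisj : (↑(Finset.Icc 1 k : Finset ℕ) : Set ℕ).PairwiseDisjoint
        (fun j => univ.filter (fun x => G.dist x v = j)) := by
      intro a _ b _ hab
      simp only [Finset.disjoint_left, Finset.mem_filter]
      rintro x ⟨_, hxa⟩ ⟨_, hxb⟩
      exact hab (hxa ▸ hxb ▸ rfl)
    calc 2 * k = ∑ j ∈ Finset.Icc 1 k, 2 := by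
          simp [Nat.card_Icc, mul_comm]
      _ ≤ ∑ j ∈ Finset.Icc 1 k, (univ.filter (fun x => G.dist x v = j)).card := by
          apply Finset.sum_le_sum
          intro j hj
          simp only [Finset.mem_Icc] at hj
          exact aux_level_two h v hj.1 (lt_of_le_of_lt (by omega) hu)
      _ = ((Finset.Icc 1 k).biUnion (fun j => univ.filter (fun x => G.dist x v = j))).card :=
          (Finset.card_biUnion (fun a ha b hb hab => hdisj ha hb hab)).symm
      _ ≤ _ := Finset.card_le_card hsub

lemma aux_cycle_level {m : ℕ} (w : Fin (m+3)) :
    ∀ j, 1 ≤ j → (univ.filter (fun x => (cycleGraph (m+3)).dist x w = j)).card ≤ 2 := by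
  intro j
  induction j with
  | zero => omega
  | succ j ih =>
    intro _
    by_cases hj : 1 ≤ j
    · -- map each level-(j+1) vertex to a closer neighbor
      have hmap : ∀ x ∈ univ.filter (fun x => (cycleGraph (m+3)).dist x w = j+1),
          ∃ y, (cycleGraph (m+3)).Adj x y ∧ (cycleGraph (m+3)).dist y w = j := by
        intro x hx
        simp only [Finset.mem_filter] at hx
        obtain ⟨y, hy1, hy2⟩ := aux_pred (G := cycleGraph (m+3)) (x := x) (w := w) (by omega)
        exact ⟨y, hy1, by omega⟩
      classical
      set f : Fin (m+3) → Fin (m+3) := fun x =>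
        if hx : x ∈ univ.filter (fun x => (cycleGraph (m+3)).dist x w = j+1) then
          Classical.choose (hmap x hx) else x with hfdef
      have hf : ∀ x ∈ univ.filter (fun x => (cycleGraph (m+3)).dist x w = j+1),
          (cycleGraph (m+3)).Adj x (f x) ∧ (cycleGraph (m+3)).dist (f x) w = j := by
        intro x hx
        simp only [hfdef, dif_pos hx]
        exact Classical.choose_spec (hmap x hx)
      have hcard : (univ.filter (fun x => (cycleGraph (m+3)).dist x w = j+1)).card
          ≤ (univ.filter (fun x => (cycleGraph (m+3)).dist x w = j)).card := by
        apply Finset.card_le_card_of_injOn f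
        · intro x hx
          simp only [Finset.mem_coe, Finset.mem_filter, Finset.mem_univ, true_and]
          exact (hf x hx).2
        · intro x1 hx1 x2 hx2 heq
          by_contra hne
          set y := f x1 with hy
          have h1 := hf x1 hx1
          have h2 := hf x2 hx2
          rw [← heq] at h2
          obtain ⟨z, hz1, hz2⟩ := aux_pred (G := cycleGraph (m+3)) (x := y) (w := w)
            (by omega)
          have hd1 : (cycleGraph (m+3)).dist x1 w = j + 1 := by
            simpa using (Finset.mem_filter.1 hx1).2
          have hd2 : (cycleGraph (m+3)).dist x2 w = j + 1 := by
            simpa using (Finset.mem_filter.1 hx2).2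
          have hdy : (cycleGraph (m+3)).dist y w = j := h1.2
          have hdz : (cycleGraph (m+3)).dist z w = j - 1 := by rw [hz2, hdy]
          have hzx1 : z ≠ x1 := by intro e; rw [e, hd1] at hdz; omega
          have hzx2 : z ≠ x2 := by intro e; rw [e, hd2] at hdz; omega
          have hsub : ({x1, x2, z} : Finset (Fin (m+3))) ⊆
              (cycleGraph (m+3)).neighborFinset y := by
            intro a ha
            simp only [Finset.mem_insert, Finset.mem_singleton] at ha
            rw [SimpleGraph.mem_neighborFinset]
            rcases ha with rfl | rfl | rfl
            · exact h1.1.symm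
            · exact h2.1.symm
            · exact hz1
          have h3 : ({x1, x2, z} : Finset (Fin (m+3))).card = 3 := by
            rw [Finset.card_insert_of_notMem (by simp [hne, hzx1.symm]),
              Finset.card_insert_of_notMem (by simp [hzx2.symm]),
              Finset.card_singleton]
          have := Finset.card_le_card hsub
          rw [h3, SimpleGraph.card_neighborFinset_eq_degree,
            cycleGraph_degree_three_le] at this
          omega
      calc _ ≤ _ := hcard
        _ ≤ 2 := ih hj
    · -- j = 0, so level 1 = neighbors of w
      have hj0 : j = 0 := by omega
      subst hj0
      have : univ.filter (fun x => (cycleGraph (m+3)).dist x w = 1)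
          = (cycleGraph (m+3)).neighborFinset w := by
        ext x
        simp [SimpleGraph.mem_neighborFinset, SimpleGraph.dist_eq_one_iff_adj,
          SimpleGraph.adj_comm]
      rw [this, SimpleGraph.card_neighborFinset_eq_degree, cycleGraph_degree_three_le]

lemma aux_cnt_upper {m : ℕ} (w : Fin (m+3)) (k : ℕ) :
    cnt (cycleGraph (m+3)) w k ≤ min (2*k) (m+3-1) := by
  classical
  refine le_min ?_ ?_
  · have hsub : (univ.erase w).filter
        (fun u => 1 ≤ (cycleGraph (m+3)).dist u w ∧ (cycleGraph (m+3)).dist u w ≤ k)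
        ⊆ (Finset.Icc 1 k).biUnion
          (fun j => univ.filter (fun x => (cycleGraph (m+3)).dist x w = j)) := by
      intro x hx
      simp only [Finset.mem_filter, Finset.mem_erase] at hx
      simp only [Finset.mem_biUnion, Finset.mem_Icc, Finset.mem_filter, Finset.mem_univ,
        true_and]
      exact ⟨(cycleGraph (m+3)).dist x w, ⟨hx.2.1, hx.2.2⟩, rfl⟩
    calc cnt (cycleGraph (m+3)) w k
        ≤ ∑ j ∈ Finset.Icc 1 k,
            (univ.filter (fun x => (cycleGraph (m+3)).dist x w = j)).card := by
          rw [cnt]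
          refine le_trans (Finset.card_le_card hsub) (Finset.card_biUnion_le)
      _ ≤ ∑ j ∈ Finset.Icc 1 k, 2 := by
          apply Finset.sum_le_sum
          intro j hj
          exact aux_cycle_level w j (Finset.mem_Icc.1 hj).1
      _ = 2 * k := by simp [Nat.card_Icc, mul_comm]
  · rw [cnt]
    calc _ ≤ (univ.erase w).card := Finset.card_le_card (Finset.filter_subset _ _)
      _ = m + 3 - 1 := by
          rw [Finset.card_erase_of_mem (Finset.mem_univ w), Finset.card_univ, Fintype.card_fin]

lemma aux_tel (g : ℕ → ℝ) : ∀ M d, d ≤ M → ∑ k ∈ Finset.Icc d M, (g k - g (k+1)) = g d - g (M+1) := by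
  intro M
  induction M with
  | zero => intro d hd; interval_cases d; simp
  | succ M ih =>
    intro d hd
    rcases Nat.lt_or_ge d (M+1) with h | h
    · rw [Finset.sum_Icc_succ_top (by omega), ih d (by omega)]; ring
    · have : d = M + 1 := by omega
      subst this; simp

lemma aux_dist_le {n : ℕ} (H : SimpleGraph (Fin n)) (u w : Fin n) : H.dist u w ≤ n := by
  by_cases hr : H.Reachable u w
  · obtain ⟨p, hp, hl⟩ := hr.exists_path_of_dist
    have := hp.length_lt
    rw [hl, Fintype.card_fin] at this
    omega
  · rw [SimpleGraph.dist_eq_zero_of_not_reachable hr]; omega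

open Classical in
lemma aux_abel {n : ℕ} (H : SimpleGraph (Fin n)) (w : Fin n) (M : ℕ)
    (hM : ∀ u, H.dist u w ≤ M) :
    ∑ u ∈ univ.erase w, (1 : ℝ) / (H.dist u w)
      = (∑ k ∈ Finset.Icc 1 M, ((1:ℝ)/k - 1/(k+1)) * (cnt H w k : ℝ))
        + (((univ.erase w).filter (fun u => 1 ≤ H.dist u w)).card : ℝ) / (M+1) := by
  have hsplit : ∑ u ∈ univ.erase w, (1 : ℝ) / (H.dist u w)
      = ∑ u ∈ (univ.erase w).filter (fun u => 1 ≤ H.dist u w), (1 : ℝ) / (H.dist u w) := by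
    rw [Finset.sum_filter_of_ne]
    intro u _ hne
    by_contra hc
    push_neg at hc
    have h0 : H.dist u w = 0 := by omega
    rw [h0] at hne; simp at hne
  rw [hsplit]
  have hterm : ∀ u ∈ (univ.erase w).filter (fun u => 1 ≤ H.dist u w),
      (1 : ℝ) / (H.dist u w)
        = (∑ k ∈ Finset.Icc 1 M, if H.dist u w ≤ k then ((1:ℝ)/k - 1/(k+1)) else 0)
          + 1/(M+1) := by
    intro u hu
    have hd1 : 1 ≤ H.dist u w := (Finset.mem_filter.1 hu).2
    have hdM : H.dist u w ≤ M := hM u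
    have h1 : (Finset.Icc 1 M).filter (fun k => H.dist u w ≤ k)
        = Finset.Icc (H.dist u w) M := by
      ext k; simp only [Finset.mem_Icc, Finset.mem_filter]; omega
    rw [← Finset.sum_filter, h1]
    have ht := aux_tel (fun k => (1:ℝ)/k) M (H.dist u w) hdM
    push_cast at ht
    rw [ht]
    ring
  rw [Finset.sum_congr rfl hterm, Finset.sum_add_distrib]
  congr 1
  · rw [Finset.sum_comm]
    apply Finset.sum_congr rfl
    intro k _
    rw [← Finset.sum_filter, Finset.filter_filter, Finset.sum_const, cnt]
    rw [nsmul_eq_mul, mul_comm]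
  · rw [Finset.sum_const, nsmul_eq_mul]
    ring

open Classical in
lemma aux_compare {m : ℕ} {G : SimpleGraph (Fin (m+3))} (h : TwoConnected G)
    (v w : Fin (m+3)) :
    ∑ u ∈ univ.erase w, (1 : ℝ) / ((cycleGraph (m+3)).dist u w)
      ≤ ∑ u ∈ univ.erase v, (1 : ℝ) / (G.dist u v) := by
  rw [aux_abel (cycleGraph (m+3)) w (m+3) (fun u => aux_dist_le _ u w),
    aux_abel G v (m+3) (fun u => aux_dist_le _ u v)]
  have hcoeff : ∀ k ∈ Finset.Icc 1 (m+3), (0:ℝ) ≤ (1:ℝ)/k - 1/(k+1) := by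
    intro k hk
    have hk1 : 1 ≤ k := (Finset.mem_Icc.1 hk).1
    have h1 : (0:ℝ) < k := by positivity -- k ≥ 1
    have : (1:ℝ)/(k+1) ≤ 1/k := by
      apply one_div_le_one_div_of_le h1
      linarith
    linarith
  apply add_le_add
  · apply Finset.sum_le_sum
    intro k hk
    apply mul_le_mul_of_nonneg_left _ (hcoeff k hk)
    have h1 := aux_cnt_upper w k
    have h2 := aux_cnt_lower h v k
    exact_mod_cast le_trans h1 h2
  · -- reachable counts
    have h1 : ((univ.erase w).filter
        (fun u => 1 ≤ (cycleGraph (m+3)).dist u w)).card ≤ m + 2 := by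
      calc _ ≤ (univ.erase w).card := Finset.card_le_card (Finset.filter_subset _ _)
        _ = m + 2 := by
            rw [Finset.card_erase_of_mem (Finset.mem_univ w), Finset.card_univ,
              Fintype.card_fin]
            omega
    have h2 : ((univ.erase v).filter (fun u => 1 ≤ G.dist u v)) = univ.erase v := by
      apply Finset.filter_true_of_mem
      intro u hu
      exact h.2.1.pos_dist_of_ne (Finset.mem_erase.1 hu).1
    rw [h2, Finset.card_erase_of_mem (Finset.mem_univ v), Finset.card_univ, Fintype.card_fin]
    have h3 : ((univ.erase w).filter
        (fun u => 1 ≤ (cycleGraph (m+3)).dist u w)).card ≤ m + 3 - 1 := by omega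
    gcongr

lemma aux_double {n : ℕ} (H : SimpleGraph (Fin n)) :
    2 * hararyIndex H = ∑ w, ∑ u ∈ univ.erase w, (1 : ℝ) / (H.dist u w) := by
  classical
  have hfull : ∑ p ∈ (univ : Finset (Fin n × Fin n)), (1:ℝ)/(H.dist p.1 p.2)
      = ∑ w, ∑ u ∈ univ.erase w, (1:ℝ)/(H.dist u w) := by
    rw [← Finset.univ_product_univ, Finset.sum_product]
    apply Finset.sum_congr rfl
    intro a _
    rw [← Finset.add_sum_erase _ _ (Finset.mem_univ a)]
    simp only [SimpleGraph.dist_self, Nat.cast_zero, div_zero, zero_add]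
    apply Finset.sum_congr rfl
    intro b _
    rw [SimpleGraph.dist_comm]
  have hsplit := (Finset.sum_filter_add_sum_filter_not
    (univ : Finset (Fin n × Fin n)) (fun p => p.1 < p.2)
    (fun p => (1:ℝ)/(H.dist p.1 p.2)))
  have h2 : ∑ p ∈ univ.filter (fun p : Fin n × Fin n => ¬ p.1 < p.2), (1:ℝ)/(H.dist p.1 p.2)
      = ∑ p ∈ univ.filter (fun p : Fin n × Fin n => p.2 < p.1), (1:ℝ)/(H.dist p.1 p.2) := by
    symm
    apply Finset.sum_subset
    · intro p hp
      simp only [Finset.mem_filter, Finset.mem_univ, true_and] at hp ⊢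
      omega
    · intro p hp hp2
      simp only [Finset.mem_filter, Finset.mem_univ, true_and, not_lt] at hp hp2
      have hpe : p.1 = p.2 := le_antisymm hp2 hp
      rw [hpe, SimpleGraph.dist_self]
      simp
  have h3 : ∑ p ∈ univ.filter (fun p : Fin n × Fin n => p.2 < p.1), (1:ℝ)/(H.dist p.1 p.2)
      = ∑ p ∈ univ.filter (fun p : Fin n × Fin n => p.1 < p.2), (1:ℝ)/(H.dist p.1 p.2) := by
    apply Finset.sum_bij' (fun p _ => Prod.swap p) (fun p _ => Prod.swap p)
    · intro p hp
      simp only [Finset.mem_filter, Finset.mem_univ, true_and] at hp ⊢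
      exact hp
    · intro p hp
      simp only [Finset.mem_filter, Finset.mem_univ, true_and] at hp ⊢
      exact hp
    · intro p _; simp
    · intro p _; simp
    · intro p _
      simp only [Prod.fst_swap, Prod.snd_swap]
      rw [SimpleGraph.dist_comm]
  rw [← hfull, ← hsplit, h2, h3, hararyIndex]
  ring


/-- In a 2-connected graph `G` on `n` vertices, for every vertex `v`,
the sum of reciprocal distances from `v` is at least `(2/n) · H(C_n)`. -/
theorem sum_reciprocal_dist_ge {n : ℕ} (G : SimpleGraph (Fin n))
    (h : TwoConnected G) (v : Fin n) :
    (2 / (n : ℝ)) * hararyIndex (cycleGraph n) ≤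
      ∑ u ∈ Finset.univ.erase v, (1 : ℝ) / (G.dist u v) := by
  obtain ⟨m, rfl⟩ : ∃ m, n = m + 3 := ⟨n - 3, by have := h.1; omega⟩
  have hpos : (0:ℝ) < ((m+3 : ℕ) : ℝ) := by positivity
  rw [div_mul_eq_mul_div, div_le_iff₀ hpos]
  calc 2 * hararyIndex (cycleGraph (m+3))
      = ∑ w, ∑ u ∈ univ.erase w, (1 : ℝ) / ((cycleGraph (m+3)).dist u w) :=
        aux_double _
    _ ≤ ∑ _w : Fin (m+3), ∑ u ∈ univ.erase v, (1 : ℝ) / (G.dist u v) := by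
        apply Finset.sum_le_sum
        intro w _
        exact aux_compare h v w
    _ = (∑ u ∈ univ.erase v, (1 : ℝ) / (G.dist u v)) * ((m+3:ℕ):ℝ) := by
        rw [Finset.sum_const, Finset.card_univ, Fintype.card_fin, nsmul_eq_mul, mul_comm]
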